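/- Let β ⊆ α be compositions with N = |α|−|β| ≥ 1. Then, as formal power series in the variables x_1, x_2, … with rational coefficients, Σ_{T ∈ SET(α/β)} F_{comp(Des_rdI(T))} = Σ_T x^T, where the right-hand sum runs over all fillings T of the cells of the skew diagram α/β with positive integers such that the entries of every column weakly increase from bottom to top and the entries of every row strictly increase from left to right. (The common value is the row-strict skew extended Schur function RE_{α/β}.) -/

import Mathlib

open scoped Classical

namespace ImmaculateSkew

/-- `part α i` is the `i`-th part (0-indexed) of the composition `α`, or `0` if out of range. -/
def part (α : List ℕ) (i : ℕ) : ℕ := α.getD i 0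

/-- a composition: a list of positive integers -/
def IsComposition (α : List ℕ) : Prop := ∀ x ∈ α, 0 < x

/-- `β ⊆ α` for compositions -/
def SubComp (β α : List ℕ) : Prop :=
  β.length ≤ α.length ∧ ∀ j < β.length, part β j ≤ part α j

/-- cell `(i, j)` (row `i` from the bottom, column `j`, both 0-indexed) lies in the diagram of `α` -/
def InDiagram (α : List ℕ) (c : ℕ × ℕ) : Prop :=
  c.1 < α.length ∧ c.2 < part α c.1

/-- cell lies in the skew diagram `α/β` -/
def InSkew (α β : List ℕ) (c : ℕ × ℕ) : Prop :=
  InDiagram α c ∧ ¬ InDiagram β c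

/-- the finite set of cells of the skew diagram `α/β` -/
noncomputable def skewCells (α β : List ℕ) : Finset (ℕ × ℕ) :=
  (Finset.range α.length ×ˢ Finset.range (α.sum + 1)).filter (InSkew α β)

/-- `N = |α| - |β|` -/
def skewSize (α β : List ℕ) : ℕ := α.sum - β.sum

/-- a filling of the cells of `α/β` using each entry of `E` exactly once, zero off the diagram -/
structure IsStdOn (α β : List ℕ) (E : Finset ℕ) (T : ℕ × ℕ → ℕ) : Prop where
  zero_off : ∀ c, ¬ InSkew α β c → T c = 0
  mem : ∀ c, InSkew α β c → T c ∈ E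
  inj : ∀ c c', InSkew α β c → InSkew α β c' → T c = T c' → c = c'
  surj : ∀ v ∈ E, ∃ c, InSkew α β c ∧ T c = v

/-- row entries strictly increase left to right -/
def RowsStrict (α β : List ℕ) (T : ℕ × ℕ → ℕ) : Prop :=
  ∀ i j j', j < j' → InSkew α β (i, j) → InSkew α β (i, j') → T (i, j) < T (i, j')

/-- row entries weakly increase left to right -/
def RowsWeak (α β : List ℕ) (T : ℕ × ℕ → ℕ) : Prop :=
  ∀ i j j', j < j' → InSkew α β (i, j) → InSkew α β (i, j') → T (i, j) ≤ T (i, j')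

/-- all column entries strictly increase bottom to top -/
def ColsStrict (α β : List ℕ) (T : ℕ × ℕ → ℕ) : Prop :=
  ∀ i i' j, i < i' → InSkew α β (i, j) → InSkew α β (i', j) → T (i, j) < T (i', j)

/-- all column entries weakly increase bottom to top -/
def ColsWeak (α β : List ℕ) (T : ℕ × ℕ → ℕ) : Prop :=
  ∀ i i' j, i < i' → InSkew α β (i, j) → InSkew α β (i', j) → T (i, j) ≤ T (i', j)

/-- the column-1 entries (those in `α/β`) strictly increase bottom to top -/
def FirstColStrict (α β : List ℕ) (T : ℕ × ℕ → ℕ) : Prop :=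
  ∀ i i', i < i' → InSkew α β (i, 0) → InSkew α β (i', 0) → T (i, 0) < T (i', 0)

/-- the column-1 entries (those in `α/β`) weakly increase bottom to top -/
def FirstColWeak (α β : List ℕ) (T : ℕ × ℕ → ℕ) : Prop :=
  ∀ i i', i < i' → InSkew α β (i, 0) → InSkew α β (i', 0) → T (i, 0) ≤ T (i', 0)

/-- standard immaculate tableau of shape `α/β` with entry set `E` -/
def IsSITOn (α β : List ℕ) (E : Finset ℕ) (T : ℕ × ℕ → ℕ) : Prop :=
  IsStdOn α β E T ∧ RowsStrict α β T ∧ FirstColStrict α β T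

/-- standard immaculate tableau of shape `α/β` (entries `1, …, N`) -/
def IsSIT (α β : List ℕ) (T : ℕ × ℕ → ℕ) : Prop :=
  IsSITOn α β (Finset.Icc 1 (skewSize α β)) T

/-- standard extended tableau: all columns increase bottom to top -/
def IsSET (α β : List ℕ) (T : ℕ × ℕ → ℕ) : Prop :=
  IsSIT α β T ∧ ColsStrict α β T

/-- the four descent-set variants -/
inductive Variant | dI | rdI | Astar | Abar

/-- `rowRel a r r'`: the relation required between the row `r` containing `i` and the row `r'`
containing `i+1` for `i` to be an `a`-descent -/
def rowRel : Variant → ℕ → ℕ → Prop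
  | .dI    => fun r r' => r < r'
  | .rdI   => fun r r' => r' ≤ r
  | .Astar => fun r r' => r' < r
  | .Abar  => fun r r' => r ≤ r'

/-- the `a`-descent set of a tableau -/
noncomputable def Des (a : Variant) (α β : List ℕ) (T : ℕ × ℕ → ℕ) : Finset ℕ :=
  (Finset.Icc 1 (skewSize α β - 1)).filter fun k =>
    ∃ c c', InSkew α β c ∧ InSkew α β c' ∧ T c = k ∧ T c' = k + 1 ∧ rowRel a c.1 c'.1

/-- interchange the entries `i` and `i+1` -/
def swapEntries (i : ℕ) (T : ℕ × ℕ → ℕ) : ℕ × ℕ → ℕ :=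
  fun c => if T c = i then i + 1 else if T c = i + 1 then i else T c

/-- the 0-Hecke operator `π_i^a` on `SIT(α/β) ∪ {0}` (the zero function plays the role of `0`) -/
noncomputable def piOp (a : Variant) (α β : List ℕ) (i : ℕ) (T : ℕ × ℕ → ℕ) : ℕ × ℕ → ℕ :=
  if i ∈ Des a α β T then
    (if IsSIT α β (swapEntries i T) then swapEntries i T else fun _ => 0)
  else T

/-- the fundamental quasisymmetric function `F_{comp(D)}` for `D ⊆ {1,…,N-1}`, as a power
series in the variables `x_1, x_2, …` (variable `x_n` is `X n`; `x_0` is unused) -/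
noncomputable def Fund (N : ℕ) (D : Finset ℕ) : MvPowerSeries ℕ ℚ :=
  fun d => (Nat.card {f : Fin N → ℕ //
    (∀ j, 1 ≤ f j) ∧
    (∀ j k : Fin N, j ≤ k → f j ≤ f k) ∧
    (∀ (j : ℕ) (_ : 1 ≤ j) (h2 : j < N), j ∈ D → f ⟨j - 1, by omega⟩ < f ⟨j, h2⟩) ∧
    (∑ j, Finsupp.single (f j) 1) = d} : ℚ)

/-- the generating function `Σ_T x^T` over all fillings of the given cells with positive
integers satisfying the predicate `P` (and equal to `0` off the given cells) -/
noncomputable def genF (cs : Finset (ℕ × ℕ)) (P : (ℕ × ℕ → ℕ) → Prop) :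
    MvPowerSeries ℕ ℚ :=
  fun d => (Nat.card {T : ℕ × ℕ → ℕ //
    (∀ c, c ∉ cs → T c = 0) ∧ (∀ c ∈ cs, 1 ≤ T c) ∧ P T ∧
    (∑ c ∈ cs, Finsupp.single (T c) 1) = d} : ℚ)

/-- complete homogeneous symmetric function `h_r` -/
noncomputable def hFun (r : ℕ) : MvPowerSeries ℕ ℚ :=
  fun d => (Nat.card {f : Fin r → ℕ //
    (∀ j, 1 ≤ f j) ∧ (∀ j k : Fin r, j ≤ k → f j ≤ f k) ∧
    (∑ j, Finsupp.single (f j) 1) = d} : ℚ)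

/-- elementary symmetric function `e_r` -/
noncomputable def eFun (r : ℕ) : MvPowerSeries ℕ ℚ :=
  fun d => (Nat.card {f : Fin r → ℕ //
    (∀ j, 1 ≤ f j) ∧ (∀ j k : Fin r, j < k → f j < f k) ∧
    (∑ j, Finsupp.single (f j) 1) = d} : ℚ)

/-- send a filling to the corresponding basis vector of the free `ℚ`-vector space on
`SIT(α/β)`, or to the zero vector if it is not a standard immaculate tableau -/
noncomputable def toBasis (α β : List ℕ) (U : ℕ × ℕ → ℕ) :
    ({T : ℕ × ℕ → ℕ // IsSIT α β T} →₀ ℚ) :=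
  if h : IsSIT α β U then Finsupp.single ⟨U, h⟩ 1 else 0

/-- the linear extension of `π_i^a` to the free `ℚ`-vector space on `SIT(α/β)` -/
noncomputable def piLin (a : Variant) (α β : List ℕ) (i : ℕ) :
    ({T : ℕ × ℕ → ℕ // IsSIT α β T} →₀ ℚ) →ₗ[ℚ]
      ({T : ℕ × ℕ → ℕ // IsSIT α β T} →₀ ℚ) :=
  Finsupp.lift _ ℚ _ (fun T => toBasis α β (piOp a α β i T.1))

/-- one step: the tableau `T` is obtained from `S` by applying one operator `π_i^a` -/
def stepRel (a : Variant) (α β : List ℕ) (S T : ℕ × ℕ → ℕ) : Prop :=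
  IsSIT α β T ∧ ∃ i, 1 ≤ i ∧ i ≤ skewSize α β - 1 ∧ piOp a α β i S = T

/-- `T` is obtained from `S` by applying a (possibly empty) sequence of operators `π_i^a`,
all intermediate results being tableaux -/
def reach (a : Variant) (α β : List ℕ) : (ℕ × ℕ → ℕ) → (ℕ × ℕ → ℕ) → Prop :=
  Relation.ReflTransGen (stepRel a α β)

/-- the number of skew cells of `α/β` strictly above row `i` other than column-1 cells -/
noncomputable def aboveCount (α β : List ℕ) (i : ℕ) : ℕ :=
  ∑ i' ∈ Finset.Ico (i + 1) α.length,
    (if i' < β.length then part α i' - part β i' else part α i' - 1)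

/-- the tableau `S^0_{α/β}`: the column-1 cells of `α/β` are filled with `1, …, ℓ(α)-ℓ(β)`
bottom to top, then the remaining cells are filled row by row, top to bottom, left to right,
with consecutive integers -/
noncomputable def S0 (α β : List ℕ) : ℕ × ℕ → ℕ :=
  fun c =>
    if InSkew α β c then
      if c.2 = 0 ∧ β.length ≤ c.1 then c.1 - β.length + 1
      else (α.length - β.length) + aboveCount α β c.1 +
        (if c.1 < β.length then c.2 - part β c.1 + 1 else c.2)
    else 0

/-- the row superstandard tableau `S^{row}_{α/β}`: rows filled left to right with `1, 2, …, N`,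
bottom row first -/
noncomputable def Srow (α β : List ℕ) : ℕ × ℕ → ℕ :=
  fun c =>
    if InSkew α β c then
      (∑ i' ∈ Finset.range c.1, (part α i' - part β i')) + (c.2 - part β c.1 + 1)
    else 0

/-- `c` is read before `c'` in the reading word (rows top to bottom, right to left in a row) -/
def readBefore (c c' : ℕ × ℕ) : Prop :=
  c'.1 < c.1 ∨ (c.1 = c'.1 ∧ c'.2 < c.2)

/-- the number of inversions of the reading word of a tableau of shape `α/β` -/
noncomputable def invNum (α β : List ℕ) (T : ℕ × ℕ → ℕ) : ℕ :=
  ((skewCells α β ×ˢ skewCells α β).filter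
    (fun p => readBefore p.1 p.2 ∧ T p.2 < T p.1)).card

/-- `φ_U(T)`: fill the cells of `β` by `U` and those of `α/β` by `T` with all entries of `T`
shifted up by `m = |β|` -/
noncomputable def phiU (α β : List ℕ) (U T : ℕ × ℕ → ℕ) : ℕ × ℕ → ℕ :=
  fun c => if InDiagram β c then U c else if InSkew α β c then T c + β.sum else 0

/-- restriction `T_{≤ m}` of `T` to entries `≤ m` -/
def restrLe (m : ℕ) (T : ℕ × ℕ → ℕ) : ℕ × ℕ → ℕ :=
  fun c => if T c ≤ m then T c else 0

/-- restriction `T_{> m}` of `T` to entries `> m` -/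
def restrGt (m : ℕ) (T : ℕ × ℕ → ℕ) : ℕ × ℕ → ℕ :=
  fun c => if m < T c then T c else 0

/-- standardisation `std(T_{>m})`: keep the entries `> m` and subtract `m` from each -/
def stdGt (m : ℕ) (T : ℕ × ℕ → ℕ) : ℕ × ℕ → ℕ :=
  fun c => if m < T c then T c - m else 0

/-- `T ∈ X_{α,β}`: `T ∈ SIT(α)` and the entries `> |β|` of `T` occupy exactly the cells
of `α/β` -/
def memX (α β : List ℕ) (T : ℕ × ℕ → ℕ) : Prop :=
  IsSIT α [] T ∧ ∀ c, InDiagram α c → (β.sum < T c ↔ ¬ InDiagram β c)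

/-! ### Auxiliary lemmas for the proof -/

section Aux

lemma part_le_sum (α : List ℕ) (i : ℕ) : part α i ≤ α.sum := by
  unfold part
  rcases lt_or_ge i α.length with h | h
  · rw [List.getD_eq_getElem α 0 h]
    exact List.le_sum_of_mem (List.getElem_mem h)
  · rw [List.getD_eq_default α 0 h]; exact Nat.zero_le _

lemma part_eq_zero_of_le {α : List ℕ} {i : ℕ} (h : α.length ≤ i) : part α i = 0 :=
  List.getD_eq_default α 0 h

lemma mem_skewCells {α β : List ℕ} {c : ℕ × ℕ} :
    c ∈ skewCells α β ↔ InSkew α β c := by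
  unfold skewCells
  rw [Finset.mem_filter]
  constructor
  · exact fun h => h.2
  · intro h
    refine ⟨?_, h⟩
    rw [Finset.mem_product, Finset.mem_range, Finset.mem_range]
    exact ⟨h.1.1, lt_of_lt_of_le h.1.2 (le_trans (part_le_sum α c.1) (Nat.le_succ _))⟩

lemma sum_part (γ : List ℕ) : ∑ i ∈ Finset.range γ.length, part γ i = γ.sum := by
  induction γ with
  | nil => simp
  | cons a γ ih =>
    rw [List.length_cons, Finset.sum_range_succ']
    simp only [part, List.getD_cons_succ, List.getD_cons_zero, List.sum_cons]
    rw [show (∑ i ∈ Finset.range γ.length, γ.getD i 0) = γ.sum from ih]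
    omega

lemma card_filter_diagram (γ : List ℕ) (L M : ℕ) (hL : γ.length ≤ L)
    (hM : ∀ i, part γ i ≤ M) :
    ((Finset.range L ×ˢ Finset.range (M + 1)).filter (InDiagram γ)).card = γ.sum := by
  have hset : (Finset.range L ×ˢ Finset.range (M + 1)).filter (InDiagram γ)
      = (Finset.range L).biUnion
          (fun i => (Finset.range (part γ i)).image (fun j => (i, j))) := by
    ext ⟨i, j⟩
    simp only [Finset.mem_filter, Finset.mem_product, Finset.mem_range, Finset.mem_biUnion,
      Finset.mem_image]
    constructor
    · rintro ⟨⟨h1, _⟩, h3, h4⟩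
      exact ⟨i, h1, j, h4, rfl⟩
    · rintro ⟨i', hi', j', hj', h⟩
      simp only [Prod.mk.injEq] at h
      obtain ⟨h1, h2⟩ := h
      have hlen : i' < γ.length := by
        by_contra hc
        rw [part_eq_zero_of_le (le_of_not_gt hc)] at hj'
        omega
      rw [← h1, ← h2]
      exact ⟨⟨hi', lt_of_lt_of_le hj' (le_trans (hM i') (Nat.le_succ M))⟩, hlen, hj'⟩
  rw [hset, Finset.card_biUnion]
  · have : ∀ i ∈ Finset.range L,
        ((Finset.range (part γ i)).image (fun j => (i, j))).card = part γ i := by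
      intro i _
      rw [Finset.card_image_of_injective _ (Prod.mk_right_injective i)]
      exact Finset.card_range _
    rw [Finset.sum_congr rfl this]
    rw [← sum_part γ]
    symm
    apply Finset.sum_subset
    · intro i hi
      rw [Finset.mem_range] at hi ⊢
      omega
    · intro i _ hi
      rw [Finset.mem_range] at hi
      exact part_eq_zero_of_le (le_of_not_gt hi)
  · intro i _ i' _ hne
    apply Finset.disjoint_left.2
    intro c hc hc'
    simp only [Finset.mem_image, Finset.mem_range] at hc hc'
    obtain ⟨j, _, rfl⟩ := hc
    obtain ⟨j', _, h⟩ := hc'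
    simp only [Prod.mk.injEq] at h
    exact hne h.1.symm

lemma card_skewCells {α β : List ℕ} (hsub : SubComp β α) :
    (skewCells α β).card = skewSize α β := by
  classical
  set box := Finset.range α.length ×ˢ Finset.range (α.sum + 1) with hbox
  have hAB : skewCells α β = box.filter (InDiagram α) \ box.filter (InDiagram β) := by
    ext c
    simp only [skewCells, Finset.mem_filter, Finset.mem_sdiff, InSkew]
    tauto
  have hBA : box.filter (InDiagram β) ⊆ box.filter (InDiagram α) := by
    intro c hc
    rw [Finset.mem_filter] at hc ⊢
    refine ⟨hc.1, lt_of_lt_of_le hc.2.1 hsub.1, lt_of_lt_of_le hc.2.2 (hsub.2 _ hc.2.1)⟩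
  rw [hAB, Finset.card_sdiff_of_subset hBA]
  rw [card_filter_diagram α α.length α.sum le_rfl (fun i => part_le_sum α i)]
  rw [card_filter_diagram β α.length α.sum hsub.1 ?_]
  · rfl
  · intro i
    rcases lt_or_ge i β.length with h | h
    · exact le_trans (hsub.2 i h) (part_le_sum α i)
    · rw [part_eq_zero_of_le h]; exact Nat.zero_le _

/-- choose a cell of `α/β` where `T` takes the value `k` (junk value if none exists) -/
noncomputable def cellOf (α β : List ℕ) (T : ℕ × ℕ → ℕ) (k : ℕ) : ℕ × ℕ :=
  if h : ∃ c, InSkew α β c ∧ T c = k then h.choose else (0, 0)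

lemma cellOf_spec {α β : List ℕ} {T : ℕ × ℕ → ℕ} {k : ℕ}
    (h : ∃ c, InSkew α β c ∧ T c = k) :
    InSkew α β (cellOf α β T k) ∧ T (cellOf α β T k) = k := by
  rw [cellOf, dif_pos h]
  exact h.choose_spec

lemma exists_cell {α β : List ℕ} {T : ℕ × ℕ → ℕ}
    (hT : IsStdOn α β (Finset.Icc 1 (skewSize α β)) T) {k : ℕ}
    (h1 : 1 ≤ k) (h2 : k ≤ skewSize α β) : ∃ c, InSkew α β c ∧ T c = k :=
  hT.surj k (Finset.mem_Icc.2 ⟨h1, h2⟩)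

lemma cellOf_eq {α β : List ℕ} {T : ℕ × ℕ → ℕ}
    (hT : IsStdOn α β (Finset.Icc 1 (skewSize α β)) T) {c : ℕ × ℕ}
    (hc : InSkew α β c) : cellOf α β T (T c) = c := by
  have h : ∃ c', InSkew α β c' ∧ T c' = T c := ⟨c, hc, rfl⟩
  obtain ⟨h1, h2⟩ := cellOf_spec h
  exact hT.inj _ _ h1 hc h2

lemma mem_val_range {α β : List ℕ} {T : ℕ × ℕ → ℕ}
    (hT : IsStdOn α β (Finset.Icc 1 (skewSize α β)) T) {c : ℕ × ℕ}
    (hc : InSkew α β c) : 1 ≤ T c ∧ T c ≤ skewSize α β := by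
  have := hT.mem c hc
  rwa [Finset.mem_Icc] at this

/-- if `k` is not an rdI-descent of `T` (with `1 ≤ k < N`), the cell of `k+1` is
strictly above the cell of `k` -/
lemma row_lt_of_not_des {α β : List ℕ} {T : ℕ × ℕ → ℕ}
    (hT : IsStdOn α β (Finset.Icc 1 (skewSize α β)) T) {k : ℕ}
    (h1 : 1 ≤ k) (h2 : k < skewSize α β) (h : k ∉ Des .rdI α β T) :
    (cellOf α β T k).1 < (cellOf α β T (k + 1)).1 := by
  obtain ⟨hck, hvk⟩ := cellOf_spec (exists_cell hT h1 (le_of_lt h2))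
  obtain ⟨hck', hvk'⟩ := cellOf_spec (exists_cell hT (by omega) h2)
  by_contra hc
  apply h
  rw [Des, Finset.mem_filter, Finset.mem_Icc]
  exact ⟨⟨h1, by omega⟩, _, _, hck, hck', hvk, hvk', by
    show (cellOf α β T (k+1)).1 ≤ (cellOf α β T k).1; omega⟩

/-- chain lemma: if no value in `[a, b)` is an rdI-descent, the cell of `b` is strictly
above the cell of `a` -/
lemma chain_row_lt {α β : List ℕ} {T : ℕ × ℕ → ℕ}
    (hT : IsStdOn α β (Finset.Icc 1 (skewSize α β)) T) {a b : ℕ}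
    (ha : 1 ≤ a) (hb : b ≤ skewSize α β) (hab : a < b)
    (hnd : ∀ k, a ≤ k → k < b → k ∉ Des .rdI α β T) :
    (cellOf α β T a).1 < (cellOf α β T b).1 := by
  have key : ∀ m, a + m ≤ b → (cellOf α β T a).1 + m ≤ (cellOf α β T (a + m)).1 := by
    intro m
    induction m with
    | zero => simp
    | succ m ih =>
      intro hm
      have h1 := ih (by omega)
      have h2 := row_lt_of_not_des hT (k := a + m) (by omega) (by omega)
        (hnd _ (by omega) (by omega))
      have : a + (m + 1) = (a + m) + 1 := by omega
      rw [this]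
      omega
  have := key (b - a) (by omega)
  have hba : a + (b - a) = b := by omega
  rw [hba] at this
  omega

end Aux

section Core

/-- the filling obtained from a standard tableau `T` by replacing the entry `k` by `g k` -/
noncomputable def Uof (α β : List ℕ) (T : ℕ × ℕ → ℕ) (g : ℕ → ℕ) : ℕ × ℕ → ℕ :=
  fun c => if InSkew α β c then g (T c) else 0

/-- conditions on the value-replacement function `g` relative to a tableau `T` -/
def GCond (α β : List ℕ) (T : ℕ × ℕ → ℕ) (g : ℕ → ℕ) : Prop :=
  (∀ k, 1 ≤ k → k ≤ skewSize α β → 1 ≤ g k) ∧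
  (∀ k k', 1 ≤ k → k ≤ k' → k' ≤ skewSize α β → g k ≤ g k') ∧
  (∀ k, k ∈ Des .rdI α β T → g k < g (k + 1))

lemma des_mem_range {α β : List ℕ} {T : ℕ × ℕ → ℕ} {k : ℕ}
    (h : k ∈ Des .rdI α β T) : 1 ≤ k ∧ k + 1 ≤ skewSize α β := by
  rw [Des, Finset.mem_filter, Finset.mem_Icc] at h
  omega

lemma Uof_apply {α β : List ℕ} {T : ℕ × ℕ → ℕ} {g : ℕ → ℕ} {c : ℕ × ℕ}
    (hc : InSkew α β c) : Uof α β T g c = g (T c) := if_pos hc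

lemma Uof_colsWeak {α β : List ℕ} {T : ℕ × ℕ → ℕ} {g : ℕ → ℕ}
    (hT : IsSET α β T) (hg : GCond α β T g) : ColsWeak α β (Uof α β T g) := by
  intro i i' j hii hc hc'
  have h1 := mem_val_range hT.1.1 hc
  have h2 := mem_val_range hT.1.1 hc'
  have hlt : T (i, j) < T (i', j) := hT.2 i i' j hii hc hc'
  rw [Uof_apply hc, Uof_apply hc']
  exact hg.2.1 _ _ h1.1 (le_of_lt hlt) h2.2

lemma Uof_rowsStrict {α β : List ℕ} {T : ℕ × ℕ → ℕ} {g : ℕ → ℕ}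
    (hT : IsSET α β T) (hg : GCond α β T g) : RowsStrict α β (Uof α β T g) := by
  intro i j j' hjj hc hc'
  have h1 := mem_val_range hT.1.1 hc
  have h2 := mem_val_range hT.1.1 hc'
  have hlt : T (i, j) < T (i, j') := hT.1.2.1 i j j' hjj hc hc'
  rw [Uof_apply hc, Uof_apply hc']
  by_cases hdes : ∃ k, T (i, j) ≤ k ∧ k < T (i, j') ∧ k ∈ Des .rdI α β T
  · obtain ⟨k, hk1, hk2, hk3⟩ := hdes
    calc g (T (i, j)) ≤ g k := hg.2.1 _ _ h1.1 hk1 (by omega)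
    _ < g (k + 1) := hg.2.2 k hk3
    _ ≤ g (T (i, j')) := hg.2.1 _ _ (by omega) (by omega) h2.2
  · push_neg at hdes
    exfalso
    have := chain_row_lt hT.1.1 h1.1 h2.2 hlt (fun k hk1 hk2 => hdes k hk1 hk2)
    rw [cellOf_eq hT.1.1 hc, cellOf_eq hT.1.1 hc'] at this
    exact lt_irrefl i this

/-- reindexing a weight sum over cells by the values of a standard tableau -/
lemma weight_reindex {α β : List ℕ} {T : ℕ × ℕ → ℕ}
    (hT : IsStdOn α β (Finset.Icc 1 (skewSize α β)) T) (g : ℕ → ℕ) :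
    ∑ c ∈ skewCells α β, Finsupp.single (g (T c)) (1 : ℕ)
      = ∑ k ∈ Finset.Icc 1 (skewSize α β), Finsupp.single (g k) (1 : ℕ) := by
  apply Finset.sum_bij (fun c _ => T c)
  · intro c hc
    exact hT.mem c (mem_skewCells.mp hc)
  · intro c hc c' hc' h
    exact hT.inj c c' (mem_skewCells.mp hc) (mem_skewCells.mp hc') h
  · intro k hk
    obtain ⟨c, hc, hck⟩ := hT.surj k hk
    exact ⟨c, mem_skewCells.mpr hc, hck⟩
  · intro c _
    rfl

lemma sum_fin_eq_sum_Icc {M : Type*} [AddCommMonoid M] (N : ℕ) (F : ℕ → M) :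
    ∑ j : Fin N, F (j.1 + 1) = ∑ k ∈ Finset.Icc 1 N, F k := by
  apply Finset.sum_bij (fun (j : Fin N) _ => j.1 + 1)
  · intro j _
    rw [Finset.mem_Icc]
    omega
  · intro j _ j' _ h
    exact Fin.ext (by omega)
  · intro k hk
    rw [Finset.mem_Icc] at hk
    exact ⟨⟨k - 1, by omega⟩, Finset.mem_univ _, by simp; omega⟩
  · intro j _
    rfl

/-- key order comparison determined by the filling: `T c < T c'` iff the pair
`(U c, row c)` is lexicographically smaller. -/
lemma lt_iff_key {α β : List ℕ} {T : ℕ × ℕ → ℕ} {g : ℕ → ℕ}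
    (hT : IsSET α β T) (hg : GCond α β T g) {c c' : ℕ × ℕ}
    (hc : InSkew α β c) (hc' : InSkew α β c') :
    T c < T c' ↔ (Uof α β T g c < Uof α β T g c' ∨
      (Uof α β T g c = Uof α β T g c' ∧ c.1 < c'.1)) := by
  have h1 := mem_val_range hT.1.1 hc
  have h2 := mem_val_range hT.1.1 hc'
  -- forward direction as an auxiliary statement, for arbitrary pairs
  have fwd : ∀ a b : ℕ × ℕ, InSkew α β a → InSkew α β b → T a < T b →
      (Uof α β T g a < Uof α β T g b ∨
        (Uof α β T g a = Uof α β T g b ∧ a.1 < b.1)) := by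
    intro a b ha hb hab
    have ha' := mem_val_range hT.1.1 ha
    have hb' := mem_val_range hT.1.1 hb
    have hle : Uof α β T g a ≤ Uof α β T g b := by
      rw [Uof_apply ha, Uof_apply hb]
      exact hg.2.1 _ _ ha'.1 (le_of_lt hab) hb'.2
    rcases lt_or_eq_of_le hle with h | h
    · exact Or.inl h
    · refine Or.inr ⟨h, ?_⟩
      have hnd : ∀ k, T a ≤ k → k < T b → k ∉ Des .rdI α β T := by
        intro k hk1 hk2 hkd
        have e1 : g (T a) ≤ g k := hg.2.1 _ _ ha'.1 hk1 (by omega)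
        have e2 : g k < g (k + 1) := hg.2.2 k hkd
        have e3 : g (k + 1) ≤ g (T b) := hg.2.1 _ _ (by omega) (by omega) hb'.2
        rw [Uof_apply ha, Uof_apply hb] at h
        omega
      have := chain_row_lt hT.1.1 ha'.1 hb'.2 hab hnd
      rwa [cellOf_eq hT.1.1 ha, cellOf_eq hT.1.1 hb] at this
  constructor
  · exact fwd c c' hc hc'
  · intro h
    rcases lt_trichotomy (T c) (T c') with h' | h' | h'
    · exact h'
    · exfalso
      have : c = c' := hT.1.1.inj c c' hc hc' h'
      subst this
      rcases h with h | ⟨_, h⟩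
      · exact lt_irrefl _ h
      · exact lt_irrefl _ h
    · exfalso
      have := fwd c' c hc' hc h'
      rcases h with h | ⟨he, h⟩ <;> rcases this with h2 | ⟨he2, h2⟩ <;> omega

/-- a standard tableau value equals the rank of its cell in the key order -/
lemma rank_formula {α β : List ℕ} {T : ℕ × ℕ → ℕ}
    (hT : IsStdOn α β (Finset.Icc 1 (skewSize α β)) T) {c : ℕ × ℕ}
    (hc : InSkew α β c) :
    T c = ((skewCells α β).filter (fun c' => T c' ≤ T c)).card := by
  have h1 := mem_val_range hT hc
  have key : ((skewCells α β).filter (fun c' => T c' ≤ T c)).card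
      = (Finset.Icc 1 (T c)).card := by
    apply Finset.card_bij (fun c' _ => T c')
    · intro c' hc'
      rw [Finset.mem_filter] at hc'
      have := mem_val_range hT (mem_skewCells.mp hc'.1)
      rw [Finset.mem_Icc]
      exact ⟨this.1, hc'.2⟩
    · intro a ha a' ha' h
      rw [Finset.mem_filter] at ha ha'
      exact hT.inj a a' (mem_skewCells.mp ha.1) (mem_skewCells.mp ha'.1) h
    · intro v hv
      rw [Finset.mem_Icc] at hv
      obtain ⟨c', hc', hcv⟩ := exists_cell hT hv.1 (le_trans hv.2 h1.2)
      refine ⟨c', Finset.mem_filter.mpr ⟨mem_skewCells.mpr hc', by omega⟩, hcv⟩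
  rw [key, Nat.card_Icc]
  omega

end Core

section Rank

/-- the strict key order on cells determined by a filling `U` -/
def keyLt (U : ℕ × ℕ → ℕ) (c c' : ℕ × ℕ) : Prop :=
  U c < U c' ∨ (U c = U c' ∧ c.1 < c'.1)

/-- the weak key order -/
def keyLe (U : ℕ × ℕ → ℕ) (c c' : ℕ × ℕ) : Prop :=
  U c < U c' ∨ (U c = U c' ∧ c.1 ≤ c'.1)

/-- the standardisation of a filling `U`: each cell gets its rank in the key order -/
noncomputable def rankT (α β : List ℕ) (U : ℕ × ℕ → ℕ) : ℕ × ℕ → ℕ :=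
  fun c => if InSkew α β c then ((skewCells α β).filter (fun c' => keyLe U c' c)).card else 0

variable {α β : List ℕ} {U : ℕ × ℕ → ℕ}

/-- hypotheses on the filling `U` -/
structure UCond (α β : List ℕ) (U : ℕ × ℕ → ℕ) : Prop where
  cw : ColsWeak α β U
  rs : RowsStrict α β U

lemma rankT_apply {α β : List ℕ} {U : ℕ × ℕ → ℕ} {c : ℕ × ℕ} (hc : InSkew α β c) :
    rankT α β U c = ((skewCells α β).filter (fun c' => keyLe U c' c)).card := if_pos hc

lemma key_inj (hU : UCond α β U) {c c' : ℕ × ℕ} (hc : InSkew α β c)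
    (hc' : InSkew α β c') (h1 : U c = U c') (h2 : c.1 = c'.1) : c = c' := by
  obtain ⟨i, j⟩ := c
  obtain ⟨i', j'⟩ := c'
  simp only at h2
  subst h2
  rcases lt_trichotomy j j' with h | h | h
  · exact absurd h1 (ne_of_lt (hU.rs i j j' h hc hc'))
  · rw [h]
  · exact absurd h1.symm (ne_of_lt (hU.rs i j' j h hc' hc))

lemma key_trichotomy (hU : UCond α β U) {c c' : ℕ × ℕ} (hc : InSkew α β c)
    (hc' : InSkew α β c') : keyLt U c c' ∨ c = c' ∨ keyLt U c' c := by
  rcases lt_trichotomy (U c) (U c') with h | h | h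
  · exact Or.inl (Or.inl h)
  · rcases lt_trichotomy c.1 c'.1 with h2 | h2 | h2
    · exact Or.inl (Or.inr ⟨h, h2⟩)
    · exact Or.inr (Or.inl (key_inj hU hc hc' h h2))
    · exact Or.inr (Or.inr (Or.inr ⟨h.symm, h2⟩))
  · exact Or.inr (Or.inr (Or.inl h))

lemma rankT_lt_of_keyLt (hU : UCond α β U) {c c' : ℕ × ℕ} (hc : InSkew α β c)
    (hc' : InSkew α β c') (h : keyLt U c c') : rankT α β U c < rankT α β U c' := by
  rw [rankT_apply hc, rankT_apply hc']
  apply Finset.card_lt_card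
  constructor
  · intro a ha
    rw [Finset.mem_filter] at ha ⊢
    refine ⟨ha.1, ?_⟩
    rcases ha.2 with h2 | ⟨h2, h3⟩ <;> rcases h with h4 | ⟨h4, h5⟩
    · exact Or.inl (lt_trans h2 h4)
    · exact Or.inl (h4 ▸ h2)
    · exact Or.inl (h2 ▸ h4)
    · exact Or.inr ⟨h2.trans h4, by omega⟩
  · intro hsub
    have hin : c' ∈ (skewCells α β).filter (fun a => keyLe U a c') :=
      Finset.mem_filter.mpr ⟨mem_skewCells.mpr hc', Or.inr ⟨rfl, le_rfl⟩⟩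
    have := hsub hin
    rw [Finset.mem_filter] at this
    rcases this.2 with h2 | ⟨h2, h3⟩ <;> rcases h with h4 | ⟨h4, h5⟩ <;> omega

lemma rankT_mem (hsub : SubComp β α) {c : ℕ × ℕ} (hc : InSkew α β c) :
    1 ≤ rankT α β U c ∧ rankT α β U c ≤ skewSize α β := by
  rw [rankT_apply hc]
  constructor
  · rw [Nat.one_le_iff_ne_zero, ← Nat.pos_iff_ne_zero, Finset.card_pos]
    exact ⟨c, Finset.mem_filter.mpr ⟨mem_skewCells.mpr hc, Or.inr ⟨rfl, le_rfl⟩⟩⟩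
  · calc ((skewCells α β).filter (fun c' => keyLe U c' c)).card
        ≤ (skewCells α β).card := Finset.card_le_card (Finset.filter_subset _ _)
    _ = skewSize α β := card_skewCells hsub

lemma rankT_inj (hU : UCond α β U) {c c' : ℕ × ℕ} (hc : InSkew α β c)
    (hc' : InSkew α β c') (h : rankT α β U c = rankT α β U c') : c = c' := by
  rcases key_trichotomy hU hc hc' with h1 | h1 | h1
  · exact absurd h (ne_of_lt (rankT_lt_of_keyLt hU hc hc' h1))
  · exact h1
  · exact absurd h.symm (ne_of_lt (rankT_lt_of_keyLt hU hc' hc h1))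

lemma rankT_surj (hsub : SubComp β α) (hU : UCond α β U) :
    ∀ v ∈ Finset.Icc 1 (skewSize α β), ∃ c, InSkew α β c ∧ rankT α β U c = v := by
  have himg : (skewCells α β).image (rankT α β U) = Finset.Icc 1 (skewSize α β) := by
    apply Finset.eq_of_subset_of_card_le
    · intro v hv
      rw [Finset.mem_image] at hv
      obtain ⟨c, hc, rfl⟩ := hv
      rw [Finset.mem_Icc]
      exact ⟨(rankT_mem hsub (mem_skewCells.mp hc)).1, (rankT_mem hsub (mem_skewCells.mp hc)).2⟩
    · rw [Nat.card_Icc, Finset.card_image_of_injOn, card_skewCells hsub]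
      · omega
      · intro a ha b hb h
        exact rankT_inj hU (mem_skewCells.mp ha) (mem_skewCells.mp hb) h
  intro v hv
  rw [← himg, Finset.mem_image] at hv
  obtain ⟨c, hc, h⟩ := hv
  exact ⟨c, mem_skewCells.mp hc, h⟩

lemma rankT_isStdOn (hsub : SubComp β α) (hU : UCond α β U) :
    IsStdOn α β (Finset.Icc 1 (skewSize α β)) (rankT α β U) := by
  refine ⟨?_, ?_, ?_, ?_⟩
  · intro c hc
    rw [rankT, if_neg hc]
  · intro c hc
    rw [Finset.mem_Icc]
    exact rankT_mem hsub hc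
  · intro c c' hc hc' h
    exact rankT_inj hU hc hc' h
  · exact rankT_surj hsub hU

lemma keyLt_of_rankT_lt (hU : UCond α β U) {c c' : ℕ × ℕ} (hc : InSkew α β c)
    (hc' : InSkew α β c') (h : rankT α β U c < rankT α β U c') : keyLt U c c' := by
  rcases key_trichotomy hU hc hc' with h1 | h1 | h1
  · exact h1
  · subst h1; omega
  · exact absurd (rankT_lt_of_keyLt hU hc' hc h1) (by omega)

lemma rankT_isSET (hsub : SubComp β α) (hU : UCond α β U) : IsSET α β (rankT α β U) := by
  have colS : ColsStrict α β (rankT α β U) := by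
    intro i i' j hii hc hc'
    apply rankT_lt_of_keyLt hU hc hc'
    rcases lt_or_eq_of_le (hU.cw i i' j hii hc hc') with h | h
    · exact Or.inl h
    · exact Or.inr ⟨h, hii⟩
  refine ⟨⟨rankT_isStdOn hsub hU, ?_, ?_⟩, colS⟩
  · intro i j j' hjj hc hc'
    exact rankT_lt_of_keyLt hU hc hc' (Or.inl (hU.rs i j j' hjj hc hc'))
  · intro i i' hii hc hc'
    exact colS i i' 0 hii hc hc'

/-- the value-replacement function recovered from a filling and its standardisation -/
noncomputable def gOf (α β : List ℕ) (U : ℕ × ℕ → ℕ) (k : ℕ) : ℕ :=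
  U (cellOf α β (rankT α β U) k)

lemma gOf_gcond (hsub : SubComp β α) (hU : UCond α β U)
    (hpos : ∀ c, InSkew α β c → 1 ≤ U c) :
    GCond α β (rankT α β U) (gOf α β U) := by
  have hT := rankT_isStdOn hsub hU
  refine ⟨?_, ?_, ?_⟩
  · intro k h1 h2
    obtain ⟨hck, _⟩ := cellOf_spec (exists_cell hT h1 h2)
    exact hpos _ hck
  · intro k k' h1 hkk h2
    rcases eq_or_lt_of_le hkk with rfl | hlt
    · exact le_rfl
    obtain ⟨hck, hvk⟩ := cellOf_spec (exists_cell hT h1 (by omega))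
    obtain ⟨hck', hvk'⟩ := cellOf_spec (exists_cell hT (by omega) h2)
    have hkey := keyLt_of_rankT_lt hU hck hck' (by rw [hvk, hvk']; exact hlt)
    rcases hkey with h | ⟨h, _⟩
    · exact le_of_lt h
    · exact le_of_eq h
  · intro k hk
    have hkr := des_mem_range hk
    rw [Des, Finset.mem_filter] at hk
    obtain ⟨_, c, c', hic, hic', hvc, hvc', hrow⟩ := hk
    have hc : cellOf α β (rankT α β U) k = c := by
      rw [← hvc]; exact cellOf_eq hT hic
    have hc' : cellOf α β (rankT α β U) (k + 1) = c' := by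
      rw [← hvc']; exact cellOf_eq hT hic'
    have hkey := keyLt_of_rankT_lt hU hic hic' (by rw [hvc, hvc']; omega)
    rw [gOf, gOf, hc, hc']
    rcases hkey with h | ⟨_, h⟩
    · exact h
    · exact absurd hrow (by simp only [rowRel] at *; omega)

lemma Uof_gOf (hsub : SubComp β α) (hU : UCond α β U)
    (hzero : ∀ c, ¬ InSkew α β c → U c = 0) :
    Uof α β (rankT α β U) (gOf α β U) = U := by
  have hT := rankT_isStdOn hsub hU
  funext c
  by_cases hc : InSkew α β c
  · rw [Uof_apply hc, gOf, cellOf_eq hT hc]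
  · rw [Uof, if_neg hc, hzero c hc]

end Rank

section Count

/-- the index set counted by the coefficient of `Fund` -/
def FsetT (N : ℕ) (D : Finset ℕ) (d : ℕ →₀ ℕ) : Type :=
  {f : Fin N → ℕ //
    (∀ j, 1 ≤ f j) ∧
    (∀ j k : Fin N, j ≤ k → f j ≤ f k) ∧
    (∀ (j : ℕ) (_ : 1 ≤ j) (h2 : j < N), j ∈ D → f ⟨j - 1, by omega⟩ < f ⟨j, h2⟩) ∧
    (∑ j, Finsupp.single (f j) 1) = d}

example (N : ℕ) (D : Finset ℕ) (d : ℕ →₀ ℕ) :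
    Fund N D d = (Nat.card (FsetT N D d) : ℚ) := rfl

/-- the index set counted by the coefficient of `genF` -/
def UsetT (cs : Finset (ℕ × ℕ)) (P : (ℕ × ℕ → ℕ) → Prop) (d : ℕ →₀ ℕ) : Type :=
  {T : ℕ × ℕ → ℕ //
    (∀ c, c ∉ cs → T c = 0) ∧ (∀ c ∈ cs, 1 ≤ T c) ∧ P T ∧
    (∑ c ∈ cs, Finsupp.single (T c) 1) = d}

example (cs : Finset (ℕ × ℕ)) (P : (ℕ × ℕ → ℕ) → Prop) (d : ℕ →₀ ℕ) :
    genF cs P d = (Nat.card (UsetT cs P d) : ℚ) := rfl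

lemma single_apply_le_sum {ι : Type*} (s : Finset ι) (g : ι → ℕ) {i : ι} (hi : i ∈ s) :
    1 ≤ (∑ j ∈ s, Finsupp.single (g j) (1 : ℕ)) (g i) := by
  rw [Finsupp.finset_sum_apply]
  calc (1 : ℕ) = (Finsupp.single (g i) (1 : ℕ)) (g i) := by rw [Finsupp.single_eq_same]
  _ ≤ ∑ j ∈ s, (Finsupp.single (g j) (1 : ℕ)) (g i) :=
      Finset.single_le_sum (f := fun j => (Finsupp.single (g j) (1 : ℕ)) (g i))
        (fun j _ => Nat.zero_le _) hi

lemma finite_FsetT (N : ℕ) (D : Finset ℕ) (d : ℕ →₀ ℕ) : Finite (FsetT N D d) := by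
  have hmem : ∀ (f : FsetT N D d) (j : Fin N), f.1 j ∈ d.support := by
    intro f j
    rw [Finsupp.mem_support_iff]
    have h := single_apply_le_sum Finset.univ f.1 (Finset.mem_univ j)
    rw [f.2.2.2.2] at h
    omega
  apply Finite.of_injective (fun f : FsetT N D d => fun j : Fin N =>
    (⟨f.1 j, hmem f j⟩ : {x // x ∈ d.support}))
  intro f g h
  apply Subtype.ext
  funext j
  exact congrArg Subtype.val (congrFun h j)

lemma finite_UsetT (cs : Finset (ℕ × ℕ)) (P : (ℕ × ℕ → ℕ) → Prop) (d : ℕ →₀ ℕ) :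
    Finite (UsetT cs P d) := by
  have hmem : ∀ (U : UsetT cs P d) (c : ℕ × ℕ), c ∈ cs → U.1 c ∈ d.support := by
    intro U c hc
    rw [Finsupp.mem_support_iff]
    have h := single_apply_le_sum cs U.1 hc
    rw [U.2.2.2.2] at h
    omega
  apply Finite.of_injective (fun U : UsetT cs P d => fun c : {x // x ∈ cs} =>
    (⟨U.1 c.1, hmem U c.1 c.2⟩ : {x // x ∈ d.support}))
  intro U V h
  apply Subtype.ext
  funext c
  by_cases hc : c ∈ cs
  · exact congrArg Subtype.val (congrFun h ⟨c, hc⟩)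
  · rw [U.2.1 c hc, V.2.1 c hc]

lemma finite_SET (α β : List ℕ) : {T : ℕ × ℕ → ℕ | IsSET α β T}.Finite := by
  haveI : Finite {T : ℕ × ℕ → ℕ | IsSET α β T} := by
    apply Finite.of_injective (fun T : {T : ℕ × ℕ → ℕ | IsSET α β T} =>
      fun c : {x // x ∈ skewCells α β} =>
        (⟨T.1 c.1, Nat.lt_succ_of_le (mem_val_range T.2.1.1 (mem_skewCells.mp c.2)).2⟩ :
          Fin (skewSize α β + 1)))
    intro T T' h
    apply Subtype.ext
    funext c
    by_cases hc : InSkew α β c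
    · exact congrArg Fin.val (congrFun h ⟨c, mem_skewCells.mpr hc⟩)
    · rw [T.2.1.1.zero_off c hc, T'.2.1.1.zero_off c hc]
  exact Set.toFinite _

lemma nat_card_sigma {ι : Type*} [Fintype ι] (F : ι → Type*) (hF : ∀ i, Finite (F i)) :
    Nat.card (Σ i, F i) = ∑ i, Nat.card (F i) := by
  haveI : ∀ i, Fintype (F i) := fun i => @Fintype.ofFinite _ (hF i)
  rw [Nat.card_eq_fintype_card, Fintype.card_sigma]
  exact Finset.sum_congr rfl (fun i _ => (Nat.card_eq_fintype_card).symm)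

end Count

section Bij

/-- extend a `Fin N`-indexed sequence to values `1, …, N` -/
def gext (N : ℕ) (f : Fin N → ℕ) : ℕ → ℕ :=
  fun k => if h : k - 1 < N then f ⟨k - 1, h⟩ else 0

lemma gext_gcond {α β : List ℕ} {T : ℕ × ℕ → ℕ} (hT : IsSET α β T)
    {f : Fin (skewSize α β) → ℕ} (h1 : ∀ j, 1 ≤ f j)
    (h2 : ∀ j k : Fin (skewSize α β), j ≤ k → f j ≤ f k)
    (h3 : ∀ (j : ℕ) (_ : 1 ≤ j) (hj : j < skewSize α β), j ∈ Des .rdI α β T →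
      f ⟨j - 1, by omega⟩ < f ⟨j, hj⟩) :
    GCond α β T (gext (skewSize α β) f) := by
  refine ⟨?_, ?_, ?_⟩
  · intro k hk1 hk2
    simp only [gext]
    rw [dif_pos (show k - 1 < skewSize α β by omega)]
    exact h1 _
  · intro k k' hk1 hkk hk2
    simp only [gext]
    rw [dif_pos (show k - 1 < skewSize α β by omega),
      dif_pos (show k' - 1 < skewSize α β by omega)]
    exact h2 _ _ (by simp only [Fin.mk_le_mk]; omega)
  · intro k hk
    obtain ⟨hk1, hk2⟩ := des_mem_range hk
    simp only [gext]
    rw [dif_pos (show k - 1 < skewSize α β by omega),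
      dif_pos (show k + 1 - 1 < skewSize α β by omega)]
    exact h3 k hk1 (by omega) hk

lemma gext_at_fin {N : ℕ} (f : Fin N → ℕ) (j : Fin N) : gext N f (j.1 + 1) = f j := by
  simp only [gext]
  rw [dif_pos (show j.1 + 1 - 1 < N by omega)]
  congr 1

/-- the forward map sends the data of a SET tableau and a compatible sequence to a
valid filling -/
lemma forward_mem {α β : List ℕ} (hsub : SubComp β α) (d : ℕ →₀ ℕ)
    {T : ℕ × ℕ → ℕ} (hT : IsSET α β T) {f : Fin (skewSize α β) → ℕ}
    (hf : (∀ j, 1 ≤ f j) ∧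
      (∀ j k : Fin (skewSize α β), j ≤ k → f j ≤ f k) ∧
      (∀ (j : ℕ) (_ : 1 ≤ j) (h2 : j < skewSize α β), j ∈ Des .rdI α β T →
        f ⟨j - 1, by omega⟩ < f ⟨j, h2⟩) ∧
      (∑ j, Finsupp.single (f j) 1) = d) :
    (∀ c, c ∉ skewCells α β → Uof α β T (gext (skewSize α β) f) c = 0) ∧
    (∀ c ∈ skewCells α β, 1 ≤ Uof α β T (gext (skewSize α β) f) c) ∧
    (ColsWeak α β (Uof α β T (gext (skewSize α β) f)) ∧
      RowsStrict α β (Uof α β T (gext (skewSize α β) f))) ∧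
    (∑ c ∈ skewCells α β,
      Finsupp.single (Uof α β T (gext (skewSize α β) f) c) 1) = d := by
  obtain ⟨h1, h2, h3, h4⟩ := hf
  have hg : GCond α β T (gext (skewSize α β) f) := gext_gcond hT h1 h2 h3
  refine ⟨?_, ?_, ⟨Uof_colsWeak hT hg, Uof_rowsStrict hT hg⟩, ?_⟩
  · intro c hc
    rw [Uof, if_neg (fun h => hc (mem_skewCells.mpr h))]
  · intro c hc
    have hin := mem_skewCells.mp hc
    rw [Uof_apply hin]
    exact hg.1 _ (mem_val_range hT.1.1 hin).1 (mem_val_range hT.1.1 hin).2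
  · have e1 : ∀ c ∈ skewCells α β,
        Finsupp.single (Uof α β T (gext (skewSize α β) f) c) (1 : ℕ)
          = Finsupp.single (gext (skewSize α β) f (T c)) (1 : ℕ) := by
      intro c hc
      rw [Uof_apply (mem_skewCells.mp hc)]
    rw [Finset.sum_congr rfl e1, weight_reindex hT.1.1,
      ← sum_fin_eq_sum_Icc (skewSize α β)
        (fun k => Finsupp.single (gext (skewSize α β) f k) (1 : ℕ)), ← h4]
    exact Finset.sum_congr rfl (fun j _ => by rw [gext_at_fin])

/-- the standardisation is determined by the filling -/
lemma T_determined {α β : List ℕ} {T T' : ℕ × ℕ → ℕ} {g g' : ℕ → ℕ}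
    (hT : IsSET α β T) (hT' : IsSET α β T') (hg : GCond α β T g)
    (hg' : GCond α β T' g') (hU : Uof α β T g = Uof α β T' g') : T = T' := by
  funext c
  by_cases hc : InSkew α β c
  · rw [rank_formula hT.1.1 hc, rank_formula hT'.1.1 hc]
    congr 1
    apply Finset.filter_congr
    intro x hx
    have hxs := mem_skewCells.mp hx
    rw [← not_lt, ← not_lt (a := T' c)]
    rw [lt_iff_key hT hg hc hxs, lt_iff_key hT' hg' hc hxs, hU]
  · rw [hT.1.1.zero_off c hc, hT'.1.1.zero_off c hc]

lemma g_determined {α β : List ℕ} {T : ℕ × ℕ → ℕ} (hT : IsSET α β T) (g : ℕ → ℕ)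
    {k : ℕ} (h1 : 1 ≤ k) (h2 : k ≤ skewSize α β) :
    g k = Uof α β T g (cellOf α β T k) := by
  obtain ⟨hck, hvk⟩ := cellOf_spec (exists_cell hT.1.1 h1 h2)
  rw [Uof_apply hck, hvk]

/-- the central counting identity -/
lemma card_eq (α β : List ℕ) (hsub : SubComp β α) (d : ℕ →₀ ℕ)
    (s : Finset (ℕ × ℕ → ℕ)) (hs : ∀ T, T ∈ s ↔ IsSET α β T) :
    ∑ T ∈ s, Nat.card (FsetT (skewSize α β) (Des .rdI α β T) d)
      = Nat.card (UsetT (skewCells α β)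
          (fun U => ColsWeak α β U ∧ RowsStrict α β U) d) := by
  set N := skewSize α β with hN
  rw [← Finset.sum_coe_sort s (fun T => Nat.card (FsetT N (Des .rdI α β T) d))]
  rw [← nat_card_sigma (fun T : {x // x ∈ s} => FsetT N (Des .rdI α β T.1) d)
    (fun T => finite_FsetT _ _ _)]
  apply Nat.card_congr
  have hTmem : ∀ T : {x // x ∈ s}, IsSET α β T.1 := fun T => (hs T.1).mp T.2
  refine Equiv.ofBijective
    (fun p => ⟨Uof α β p.1.1 (gext N p.2.1),
      forward_mem hsub d (hTmem p.1) p.2.2⟩) ⟨?_, ?_⟩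
  · -- injectivity
    rintro ⟨⟨T, hTs⟩, f, hf⟩ ⟨⟨T', hTs'⟩, f', hf'⟩ h
    have hU : Uof α β T (gext N f) = Uof α β T' (gext N f') :=
      congrArg Subtype.val h
    have hT : IsSET α β T := (hs T).mp hTs
    have hT' : IsSET α β T' := (hs T').mp hTs'
    have hgc : GCond α β T (gext N f) := gext_gcond hT hf.1 hf.2.1 hf.2.2.1
    have hgc' : GCond α β T' (gext N f') := gext_gcond hT' hf'.1 hf'.2.1 hf'.2.2.1
    have hTT : T = T' := T_determined hT hT' hgc hgc' hU
    subst hTT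
    have hff : f = f' := by
      funext j
      have e1 : f j = gext N f (j.1 + 1) := (gext_at_fin f j).symm
      have e2 : f' j = gext N f' (j.1 + 1) := (gext_at_fin f' j).symm
      rw [e1, e2, g_determined hT (gext N f) (by omega) (by omega),
        g_determined hT (gext N f') (by omega) (by omega), hU]
    subst hff
    rfl
  · -- surjectivity
    rintro ⟨U, hzero, hpos, ⟨hcw, hrs⟩, hwt⟩
    have hUc : UCond α β U := ⟨hcw, hrs⟩
    have hzero' : ∀ c, ¬ InSkew α β c → U c = 0 :=
      fun c hc => hzero c (fun h => hc (mem_skewCells.mp h))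
    have hpos' : ∀ c, InSkew α β c → 1 ≤ U c :=
      fun c hc => hpos c (mem_skewCells.mpr hc)
    set T := rankT α β U with hTdef
    have hSET : IsSET α β T := rankT_isSET hsub hUc
    have hStd : IsStdOn α β (Finset.Icc 1 N) T := rankT_isStdOn hsub hUc
    have hgc : GCond α β T (gOf α β U) := gOf_gcond hsub hUc hpos'
    have hrecov : Uof α β T (gOf α β U) = U := Uof_gOf hsub hUc hzero'
    refine ⟨⟨⟨T, (hs T).mpr hSET⟩, ⟨fun j => gOf α β U (j.1 + 1), ?_, ?_, ?_, ?_⟩⟩, ?_⟩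
    · intro j
      exact hgc.1 _ (by omega) (by omega)
    · intro j k hjk
      exact hgc.2.1 _ _ (by omega) (by omega) (by omega)
    · intro j hj1 hj2 hjD
      have e : j - 1 + 1 = j := by omega
      have := hgc.2.2 j hjD
      simpa only [e] using this
    · rw [sum_fin_eq_sum_Icc N (fun k => Finsupp.single (gOf α β U k) (1 : ℕ)),
        ← weight_reindex hStd (gOf α β U)]
      rw [← hwt]
      apply Finset.sum_congr rfl
      intro c hc
      rw [gOf, cellOf_eq hStd (mem_skewCells.mp hc)]
    · apply Subtype.ext
      show Uof α β T (gext N (fun j => gOf α β U (j.1 + 1))) = U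
      rw [← hrecov]
      funext c
      by_cases hc : InSkew α β c
      · rw [Uof_apply hc, Uof_apply hc]
        have h1 := mem_val_range hStd hc
        rw [gext, dif_pos (show T c - 1 < N by omega)]
        simp only
        congr 1
        omega
      · rw [Uof, Uof, if_neg hc, if_neg hc]

end Bij

/-- the row-strict skew extended Schur function `RE_{α/β}`:
`Σ_{T ∈ SET(α/β)} F_{comp(Des_rdI(T))}` equals the generating function of all fillings of
`α/β` with weakly increasing columns and strictly increasing rows. -/
theorem skew_rowstrict_extended_schur (α β : List ℕ)
    (hα : IsComposition α) (hβ : IsComposition β) (hsub : SubComp β α)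
    (hN : 1 ≤ skewSize α β) :
    (∑ᶠ (T : ℕ × ℕ → ℕ) (_ : IsSET α β T), Fund (skewSize α β) (Des .rdI α β T)) =
      genF (skewCells α β) (fun T => ColsWeak α β T ∧ RowsStrict α β T) := by
  have hfin : {T : ℕ × ℕ → ℕ | IsSET α β T}.Finite := finite_SET α β
  have h1 : (∑ᶠ (T : ℕ × ℕ → ℕ) (_ : IsSET α β T),
        Fund (skewSize α β) (Des .rdI α β T))
      = ∑ T ∈ hfin.toFinset, Fund (skewSize α β) (Des .rdI α β T) :=
    finsum_mem_eq_finite_toFinset_sum _ hfin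
  rw [h1]
  apply MvPowerSeries.ext
  intro d
  rw [map_sum]
  have h2 : ∀ T ∈ hfin.toFinset,
      (MvPowerSeries.coeff d) (Fund (skewSize α β) (Des .rdI α β T))
        = ((Nat.card (FsetT (skewSize α β) (Des .rdI α β T) d) : ℕ) : ℚ) :=
    fun T _ => rfl
  rw [Finset.sum_congr rfl h2, ← Nat.cast_sum]
  have h3 : (MvPowerSeries.coeff d)
        (genF (skewCells α β) (fun T => ColsWeak α β T ∧ RowsStrict α β T))
      = ((Nat.card (UsetT (skewCells α β)
          (fun U => ColsWeak α β U ∧ RowsStrict α β U) d) : ℕ) : ℚ) := rfl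
  rw [h3]
  congr 1
  exact card_eq α β hsub d hfin.toFinset (fun T => hfin.mem_toFinset)

end ImmaculateSkew
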